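/- Let k > 0, ν > 0, and c ∈ ℝ. Then for all x > 0, x · d/dx W^k_{ν,c}(x) = (x/k) W^k_{ν−k,c}(x) − (ν/k) W^k_{ν,c}(x). -/

import Mathlib

open Real

/-- The k-gamma function, `Γ_k(x) = k^(x/k - 1) * Γ(x/k)`. -/
noncomputable def kGamma (k x : ℝ) : ℝ := k ^ (x / k - 1) * Real.Gamma (x / k)

lemma kGamma_pos {k x : ℝ} (hk : 0 < k) (hx : 0 < x) : 0 < kGamma k x :=
  mul_pos (rpow_pos_of_pos hk _) (Real.Gamma_pos_of_pos (div_pos hx hk))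

lemma kGamma_add_k {k x : ℝ} (hk : 0 < k) (hx : 0 < x) :
    kGamma k (x + k) = x * kGamma k x := by
  unfold kGamma
  have h1 : (x + k) / k = x / k + 1 := by field_simp
  rw [h1, Real.Gamma_add_one (ne_of_gt (div_pos hx hk))]
  have h2 : x / k + 1 - 1 = x / k - 1 + 1 := by ring
  rw [h2, Real.rpow_add_one hk.ne']
  field_simp

lemma Gamma_factorial_le {t : ℝ} (ht : 0 < t) (r : ℕ) :
    (r.factorial : ℝ) * Real.Gamma (t + 1) ≤ Real.Gamma (t + r + 1) := by
  induction r with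
  | zero => simp
  | succ n ih =>
    have hpos : 0 < t + n + 1 := by positivity
    have : Real.Gamma (t + (n+1) + 1) = (t + n + 1) * Real.Gamma (t + n + 1) := by
      have : (t : ℝ) + (n+1) + 1 = (t + n + 1) + 1 := by push_cast; ring
      rw [this, Real.Gamma_add_one hpos.ne']
    push_cast [Nat.factorial_succ]
    rw [this]
    calc ((n:ℝ)+1) * n.factorial * Real.Gamma (t+1) = ((n:ℝ)+1) * ((n.factorial:ℝ) * Real.Gamma (t+1)) := by ring
    _ ≤ ((n:ℝ)+1) * Real.Gamma (t + n + 1) := by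
        apply mul_le_mul_of_nonneg_left ih (by positivity)
    _ ≤ (t + n + 1) * Real.Gamma (t + n + 1) := by
        apply mul_le_mul_of_nonneg_right (by linarith) (Real.Gamma_pos_of_pos (by positivity)).le

lemma nat_succ_le_two_pow (r : ℕ) : ((r:ℝ) + 1) ≤ 2 ^ r := by
  induction r with
  | zero => norm_num
  | succ n ih => push_cast; rw [pow_succ]; push_cast at ih; nlinarith [pow_pos (show (0:ℝ)<2 by norm_num) n]

lemma summable_succ_pow_div_factorial (M : ℝ) :
    Summable (fun r : ℕ => ((r:ℝ) + 1) * M ^ r / r.factorial) := by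
  apply Summable.of_norm
  apply Summable.of_nonneg_of_le (fun r => norm_nonneg _)
    (fun r => ?_) ((Real.summable_pow_div_factorial (2 * |M|)))
  have hf : (0:ℝ) < r.factorial := by positivity
  rw [Real.norm_eq_abs, abs_div, abs_mul, abs_of_nonneg (by positivity : (0:ℝ) ≤ (r:ℝ)+1),
    abs_of_nonneg hf.le, abs_pow]
  rw [div_le_div_iff₀ hf hf]
  have := nat_succ_le_two_pow r
  have h2 : ((r:ℝ)+1) * |M|^r ≤ 2^r * |M|^r :=
    mul_le_mul_of_nonneg_right this (by positivity)
  calc ((r:ℝ)+1) * |M|^r * r.factorial ≤ 2^r * |M|^r * r.factorial := by nlinarith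
  _ = (2*|M|)^r * r.factorial := by rw [mul_pow]

lemma kGamma_eval (k ν : ℝ) (hk : 0 < k) (r : ℕ) :
    kGamma k (r * k + ν + k) = k ^ ((r:ℝ) + ν/k) * Real.Gamma (ν/k + r + 1) := by
  unfold kGamma
  have h1 : (↑r * k + ν + k) / k - 1 = (r:ℝ) + ν/k := by field_simp; ring
  have h2 : (↑r * k + ν + k) / k = ν/k + r + 1 := by field_simp; ring
  rw [h1, h2]

lemma summable_master (k ν c : ℝ) (hk : 0 < k) (hν : 0 < ν) (K : ℝ) (hK : 0 ≤ K) :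
    Summable (fun r : ℕ =>
      |(-c)^r / (kGamma k (r*k+ν+k) * r.factorial)| * ((r:ℝ)+1) * K^r) := by
  set t := ν / k with ht
  have ht0 : 0 < t := div_pos hν hk
  set C := k ^ t * Real.Gamma (t + 1) with hC
  have hC0 : 0 < C := mul_pos (rpow_pos_of_pos hk _) (Real.Gamma_pos_of_pos (by linarith))
  apply Summable.of_nonneg_of_le (fun r => by positivity)
    (fun r => ?_)
    (((summable_succ_pow_div_factorial (K * |c| / k)).mul_right (1/C)))
  have hf : (0:ℝ) < r.factorial := by positivity
  have hf1 : (1:ℝ) ≤ r.factorial := by exact_mod_cast r.factorial_pos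
  have hkG : kGamma k (r*k+ν+k) = k ^ ((r:ℝ) + t) * Real.Gamma (t + r + 1) := by
    rw [kGamma_eval k ν hk r]
  have hGpos : 0 < Real.Gamma (t + r + 1) := Real.Gamma_pos_of_pos (by positivity)
  have hrp : k ^ ((r:ℝ) + t) = k ^ r * k ^ t := by
    rw [Real.rpow_add hk, Real.rpow_natCast]
  have hden : (k:ℝ) ^ r * C * r.factorial ≤ kGamma k (r*k+ν+k) * r.factorial := by
    rw [hkG, hrp, hC]
    have h1 : (r.factorial:ℝ) * Real.Gamma (t+1) ≤ Real.Gamma (t + r + 1) :=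
      Gamma_factorial_le ht0 r
    have hkr : (0:ℝ) < k ^ r := by positivity
    have hkt : (0:ℝ) < k ^ t := rpow_pos_of_pos hk _
    have hG1 : (0:ℝ) < Real.Gamma (t+1) := Real.Gamma_pos_of_pos (by linarith)
    calc k ^ r * (k ^ t * Real.Gamma (t+1)) * r.factorial
        = (k ^ r * k ^ t) * ((r.factorial:ℝ) * Real.Gamma (t+1)) := by ring
      _ ≤ (k ^ r * k ^ t) * Real.Gamma (t + r + 1) :=
          mul_le_mul_of_nonneg_left h1 (mul_pos hkr hkt).le
      _ = (k ^ r * k ^ t) * Real.Gamma (t + r + 1) * 1 := by ring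
      _ ≤ k ^ r * k ^ t * Real.Gamma (t + r + 1) * r.factorial := by
          apply mul_le_mul_of_nonneg_left hf1 (by positivity)
  have hdpos : (0:ℝ) < (k:ℝ) ^ r * C * r.factorial := by positivity
  have habs : |(-c)^r / (kGamma k (r*k+ν+k) * r.factorial)| ≤ |c|^r / ((k:ℝ)^r * C * r.factorial) := by
    rw [abs_div, abs_pow, abs_neg]
    rw [abs_of_pos (mul_pos (kGamma_pos hk (by positivity)) hf)]
    exact div_le_div_of_nonneg_left (by positivity) hdpos hden
  calc |(-c)^r / (kGamma k (r*k+ν+k) * r.factorial)| * ((r:ℝ)+1) * K^r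
      ≤ |c|^r / ((k:ℝ)^r * C * r.factorial) * ((r:ℝ)+1) * K^r := by
        apply mul_le_mul_of_nonneg_right (mul_le_mul_of_nonneg_right habs (by positivity)) (by positivity)
    _ = ((r:ℝ)+1) * (K * |c| / k) ^ r / r.factorial * (1/C) := by
        rw [div_pow, mul_pow]
        field_simp

lemma summable_main (k ν c : ℝ) (hk : 0 < k) (hν : 0 < ν) (y : ℝ) (hy : 0 ≤ y) :
    Summable (fun r : ℕ =>
      |(-c)^r / (kGamma k (↑r*k+ν+k) * r.factorial)| * (2*(r:ℝ)+2) * y^(2*r)) := by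
  have h := (summable_master k ν c hk hν (y^2) (sq_nonneg y)).mul_left 2
  apply h.congr
  intro r
  rw [pow_mul]
  ring

lemma summable_A (k ν c : ℝ) (hk : 0 < k) (hν : 0 < ν) (y : ℝ) :
    Summable (fun r : ℕ =>
      (-c)^r / (kGamma k (↑r*k+ν+k) * r.factorial) * y^(2*r)) := by
  apply Summable.of_norm
  apply Summable.of_nonneg_of_le (fun r => norm_nonneg _) (fun r => ?_)
    (summable_main k ν c hk hν |y| (abs_nonneg y))
  rw [Real.norm_eq_abs, abs_mul, abs_pow]
  have h1 : (0:ℝ) ≤ |(-c)^r / (kGamma k (↑r*k+ν+k) * r.factorial)| * |y|^(2*r) := by positivity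
  nlinarith [abs_nonneg ((-c)^r / (kGamma k (↑r*k+ν+k) * r.factorial)),
    pow_nonneg (abs_nonneg y) (2*r),
    mul_nonneg (abs_nonneg ((-c)^r / (kGamma k (↑r*k+ν+k) * r.factorial)))
      (pow_nonneg (abs_nonneg y) (2*r))]

lemma summable_S (k ν c : ℝ) (hk : 0 < k) (hν : 0 < ν) (y : ℝ) :
    Summable (fun r : ℕ =>
      (-c)^r / (kGamma k (↑r*k+ν+k) * r.factorial) * (2*(r:ℝ)) * y^(2*r)) := by
  apply Summable.of_norm
  apply Summable.of_nonneg_of_le (fun r => norm_nonneg _) (fun r => ?_)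
    (summable_main k ν c hk hν |y| (abs_nonneg y))
  rw [Real.norm_eq_abs, abs_mul, abs_mul, abs_pow]
  rw [abs_of_nonneg (by positivity : (0:ℝ) ≤ 2*(r:ℝ))]
  have h2 : (2*(r:ℝ)) ≤ 2*(r:ℝ)+2 := by linarith
  have hnn : (0:ℝ) ≤ |(-c)^r / (kGamma k (↑r*k+ν+k) * r.factorial)| := abs_nonneg _
  have hp : (0:ℝ) ≤ |y|^(2*r) := pow_nonneg (abs_nonneg y) _
  nlinarith

lemma hasDerivAt_f (k ν c : ℝ) (hk : 0 < k) (hν : 0 < ν) (y : ℝ) :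
    HasDerivAt (fun w : ℝ => ∑' r : ℕ, (-c)^r / (kGamma k (↑r*k+ν+k) * r.factorial) * w^(2*r))
      (∑' r : ℕ, (-c)^r / (kGamma k (↑r*k+ν+k) * r.factorial) * ((2*r : ℕ) * y^(2*r-1))) y := by
  set R : ℝ := |y| + 1 with hR
  have hR1 : (1:ℝ) ≤ R := le_add_of_nonneg_left (abs_nonneg y)
  have hR0 : (0:ℝ) ≤ R := by linarith
  have hmem : y ∈ Metric.ball (0:ℝ) R := by
    simp only [Metric.mem_ball, Real.dist_eq, sub_zero]
    exact lt_add_one |y|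
  refine hasDerivAt_tsum_of_isPreconnected
    (u := fun r : ℕ => |(-c)^r / (kGamma k (↑r*k+ν+k) * r.factorial)| * (2*(r:ℝ)+2) * R^(2*r))
    (summable_main k ν c hk hν R hR0)
    Metric.isOpen_ball
    ((convex_ball (0:ℝ) R).isPreconnected)
    (fun n w _ => (hasDerivAt_pow (2*n) w).const_mul _)
    (fun n w hw => ?_) hmem (summable_A k ν c hk hν y) hmem
  have hw' : |w| < R := by simpa [Real.dist_eq] using hw
  rw [Real.norm_eq_abs, abs_mul, abs_mul, abs_pow, Nat.abs_cast]
  have hcoef := abs_nonneg ((-c)^n / (kGamma k (↑n*k+ν+k) * n.factorial))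
  have key : ((2*n : ℕ):ℝ) * |w|^(2*n-1) ≤ (2*(n:ℝ)+2) * R^(2*n) := by
    rcases n with _ | m
    · simp
    · have he : 2*(m+1)-1 = 2*m+1 := by omega
      rw [he]
      have h1 : |w|^(2*m+1) ≤ R^(2*m+1) :=
        pow_le_pow_left₀ (abs_nonneg w) hw'.le _
      have h2 : R^(2*m+1) ≤ R^(2*(m+1)) := pow_le_pow_right₀ hR1 (by omega)
      have h3 : ((2*(m+1) : ℕ):ℝ) ≤ 2*((m+1:ℕ):ℝ)+2 := by push_cast; linarith
      have h4 : (0:ℝ) ≤ ((2*(m+1) : ℕ):ℝ) := by positivity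
      have h5 : (0:ℝ) ≤ R^(2*(m+1)) := by positivity
      calc ((2*(m+1) : ℕ):ℝ) * |w|^(2*m+1) ≤ ((2*(m+1) : ℕ):ℝ) * R^(2*(m+1)) := by
            apply mul_le_mul_of_nonneg_left (le_trans h1 h2) h4
        _ ≤ (2*((m+1:ℕ):ℝ)+2) * R^(2*(m+1)) := mul_le_mul_of_nonneg_right h3 h5
  calc |(-c)^n / (kGamma k (↑n*k+ν+k) * n.factorial)| * (((2*n:ℕ):ℝ) * |w|^(2*n-1))
      ≤ |(-c)^n / (kGamma k (↑n*k+ν+k) * n.factorial)| * ((2*(n:ℝ)+2) * R^(2*n)) :=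
        mul_le_mul_of_nonneg_left key hcoef
    _ = |(-c)^n / (kGamma k (↑n*k+ν+k) * n.factorial)| * (2*(n:ℝ)+2) * R^(2*n) := by ring

/-- The generalized k-Bessel function `W^k_{ν,c}(x)`. -/
noncomputable def kBesselW (k ν c x : ℝ) : ℝ :=
  ∑' r : ℕ, (-c) ^ r / (kGamma k (r * k + ν + k) * (r.factorial : ℝ)) *
    (x / 2) ^ (2 * (r : ℝ) + ν / k)


lemma kBesselW_eq (k ν c : ℝ) (w : ℝ) (hw : 0 < w) :
    kBesselW k ν c w = (w/2)^(ν/k) *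
      ∑' r : ℕ, (-c)^r / (kGamma k (↑r*k+ν+k) * r.factorial) * (w/2)^(2*r) := by
  unfold kBesselW
  rw [← tsum_mul_left]
  apply tsum_congr
  intro r
  have hw2 : 0 < w/2 := by linarith
  rw [Real.rpow_add hw2]
  have hc : (2*(r:ℝ)) = ((2*r:ℕ):ℝ) := by push_cast; ring
  rw [hc, Real.rpow_natCast]
  ring

theorem kBessel_recurrence_two (k ν c : ℝ) (hk : 0 < k) (hν : 0 < ν) (x : ℝ) (hx : 0 < x) :
    x * deriv (kBesselW k ν c) x =
      x / k * kBesselW k (ν - k) c x - ν / k * kBesselW k ν c x := by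
  have hk0 : k ≠ 0 := hk.ne'
  have hz : 0 < x/2 := by linarith
  -- the even power series and its derivative
  have hhalf : HasDerivAt (fun w : ℝ => w/2) (1/2) x := (hasDerivAt_id x).div_const 2
  have hder := hasDerivAt_f k ν c hk hν (x/2)
  have h2 : HasDerivAt
      (fun w : ℝ => ∑' r : ℕ, (-c)^r / (kGamma k (↑r*k+ν+k) * r.factorial) * (w/2)^(2*r))
      ((∑' r : ℕ, (-c)^r / (kGamma k (↑r*k+ν+k) * r.factorial) * ((2*r : ℕ) * (x/2)^(2*r-1))) * (1/2))
      x := by exact hder.comp x hhalf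
  have h1 : HasDerivAt (fun w : ℝ => (w/2)^(ν/k)) ((ν/k * (x/2)^(ν/k - 1)) * (1/2)) x :=
    by exact (Real.hasDerivAt_rpow_const (p := ν/k) (Or.inl hz.ne')).comp x hhalf
  have hG : HasDerivAt (fun w : ℝ => (w/2)^(ν/k) *
      ∑' r : ℕ, (-c)^r / (kGamma k (↑r*k+ν+k) * r.factorial) * (w/2)^(2*r)) _ x := h1.mul h2
  have hEq : kBesselW k ν c =ᶠ[nhds x] (fun w => (w/2)^(ν/k) *
      ∑' r : ℕ, (-c)^r / (kGamma k (↑r*k+ν+k) * r.factorial) * (w/2)^(2*r)) := by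
    filter_upwards [isOpen_Ioi.mem_nhds (show x ∈ Set.Ioi (0:ℝ) from hx)] with w hw
    exact kBesselW_eq k ν c w hw
  rw [hEq.deriv_eq, hG.deriv]
  rw [kBesselW_eq k (ν-k) c x hx, kBesselW_eq k ν c x hx]
  -- abbreviations
  set z : ℝ := x/2 with hzdef
  set A : ℝ := ∑' r : ℕ, (-c)^r / (kGamma k (↑r*k+ν+k) * r.factorial) * z^(2*r) with hA
  set D : ℝ := ∑' r : ℕ, (-c)^r / (kGamma k (↑r*k+ν+k) * r.factorial) * ((2*r : ℕ) * z^(2*r-1)) with hD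
  set B : ℝ := ∑' r : ℕ, (-c)^r / (kGamma k (↑r*k+(ν-k)+k) * r.factorial) * z^(2*r) with hB
  set S : ℝ := ∑' r : ℕ, (-c)^r / (kGamma k (↑r*k+ν+k) * r.factorial) * (2*(r:ℝ)) * z^(2*r) with hS
  have hzD : z * D = S := by
    rw [hD, hS, ← tsum_mul_left]
    apply tsum_congr
    intro r
    rcases r with _ | m
    · simp
    · have he : 2*(m+1)-1 = 2*m+1 := by omega
      rw [he]
      push_cast
      ring
  have hb : ∀ r : ℕ, (-c)^r / (kGamma k (↑r*k+(ν-k)+k) * r.factorial) =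
      (↑r*k+ν) * ((-c)^r / (kGamma k (↑r*k+ν+k) * r.factorial)) := by
    intro r
    have hpos : (0:ℝ) < ↑r*k+ν := by positivity
    rw [show ((r:ℝ)*k+(ν-k)+k : ℝ) = ↑r*k+ν by ring, kGamma_add_k hk hpos]
    have hG1 : kGamma k (↑r*k+ν) ≠ 0 := (kGamma_pos hk hpos).ne'
    have hf : ((r.factorial : ℝ)) ≠ 0 := by positivity
    field_simp
  have hBS : (2/k) * B = S + (2*(ν/k)) * A := by
    rw [hB, ← tsum_mul_left]
    have hterm : ∀ r : ℕ, (2/k) * ((-c)^r / (kGamma k (↑r*k+(ν-k)+k) * r.factorial) * z^(2*r)) =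
        (-c)^r / (kGamma k (↑r*k+ν+k) * r.factorial) * (2*(r:ℝ)) * z^(2*r) +
        (2*(ν/k)) * ((-c)^r / (kGamma k (↑r*k+ν+k) * r.factorial) * z^(2*r)) := by
      intro r
      rw [hb r]
      have hc2 : (2/k)*((r:ℝ)*k+ν) = 2*(r:ℝ) + 2*(ν/k) := by field_simp
      linear_combination ((-c)^r / (kGamma k (↑r*k+ν+k) * r.factorial) * z^(2*r)) * hc2
    rw [tsum_congr hterm, Summable.tsum_add (summable_S k ν c hk hν z)
      ((summable_A k ν c hk hν z).mul_left (2*(ν/k))), tsum_mul_left]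
  have hx2 : x = 2*z := by rw [hzdef]; ring
  have hexp : (ν-k)/k = ν/k - 1 := by field_simp
  have hpow : z^(ν/k - 1) * z = z^(ν/k) := by
    rw [← Real.rpow_add_one hz.ne' (ν/k - 1)]
    norm_num
  rw [hexp, hx2]
  linear_combination (z^(ν/k)) * hzD + (ν/k * A - S - 2*(ν/k)*A) * hpow - (z * z^(ν/k-1)) * hBS
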